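/- Let r be a prime power, q = r^m, a₀,...,a_{m−1} ∈ F_q, and f₀,...,f_{m−1} ∈ F_r[X] q-linearized polynomials. Form the m×m matrix M over the ring R_q of q-linearized polynomials whose (i,j) entry (indices mod m) is a_{j−i}^{r^i} · f_{j−i} ∘ X^{r^{δ(i,j)}}, where δ(i,j) = 0 if i ≤ j and δ(i,j) = m if i > j. If z in the algebraic closure of F_r satisfies Σ_{i=0}^{m−1} aᵢ fᵢ(z)^{r^i} = 0, then (det M)(z) = 0. -/

import Mathlib

open Polynomial Finset

section Aux

variable {Ω : Type*} [Field Ω] (q : ℕ) (E : Subring Ω)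

noncomputable def phiQ (P : Polynomial E) : Polynomial Ω :=
  P.sum fun k c => C (c : Ω) * X ^ q ^ k

theorem phiQ_zero : phiQ q E 0 = 0 := Polynomial.sum_zero_index _

theorem phiQ_monomial (k : ℕ) (c : E) :
    phiQ q E (monomial k c) = C (c : Ω) * X ^ q ^ k := by
  unfold phiQ
  rw [Polynomial.sum_monomial_index _ _ (by simp)]

theorem phiQ_add (P Q : Polynomial E) :
    phiQ q E (P + Q) = phiQ q E P + phiQ q E Q := by
  unfold phiQ
  rw [Polynomial.sum_add_index] <;> intros <;> simp [map_add] <;> ring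

theorem phiQ_one : phiQ q E 1 = X := by
  have h : (1 : Polynomial E) = monomial 0 1 := by simp
  rw [h, phiQ_monomial]; simp

variable {p s : ℕ} [Fact p.Prime] [CharP Ω p]

theorem phiQ_comp_add (hq : q = p ^ s) (P : Polynomial E) (u v : Polynomial Ω) :
    (phiQ q E P).comp (u + v) = (phiQ q E P).comp u + (phiQ q E P).comp v := by
  induction P using Polynomial.induction_on' with
  | add P Q hP hQ => rw [phiQ_add, add_comp, add_comp, add_comp, hP, hQ]; ring
  | monomial k c =>
    rw [phiQ_monomial]
    simp only [mul_comp, C_comp, X_pow_comp]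
    have h : (u + v) ^ q ^ k = u ^ q ^ k + v ^ q ^ k := by
      rw [hq, ← pow_mul, add_pow_char_pow]
    rw [h, mul_add]

theorem phiQ_comp_zero (hq : q ≠ 0) (P : Polynomial E) :
    (phiQ q E P).comp 0 = 0 := by
  induction P using Polynomial.induction_on' with
  | add P Q hP hQ => rw [phiQ_add, add_comp, hP, hQ, add_zero]
  | monomial k c =>
    rw [phiQ_monomial]
    simp [zero_pow (pow_ne_zero k hq)]

theorem phiQ_eval_zero (hq : q ≠ 0) (P : Polynomial E) :
    (phiQ q E P).eval 0 = 0 := by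
  induction P using Polynomial.induction_on' with
  | add P Q hP hQ => rw [phiQ_add, eval_add, hP, hQ, add_zero]
  | monomial k c =>
    rw [phiQ_monomial]
    simp [zero_pow (pow_ne_zero k hq)]

theorem E_pow_q_pow (hE : ∀ x ∈ E, x ^ q = x) (x : E) (k : ℕ) :
    (x : Ω) ^ q ^ k = x := by
  induction k with
  | zero => simp
  | succ k ih => rw [pow_succ, pow_mul, ih, hE _ x.2]

theorem phiQ_mul (hq : q = p ^ s) (hE : ∀ x ∈ E, x ^ q = x) (P Q : Polynomial E) :
    phiQ q E (P * Q) = (phiQ q E P).comp (phiQ q E Q) := by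
  induction P using Polynomial.induction_on' with
  | add P P' hP hP' => rw [add_mul, phiQ_add, phiQ_add, add_comp, hP, hP']
  | monomial k c =>
    induction Q using Polynomial.induction_on' with
    | add Q Q' hQ hQ' =>
      rw [mul_add, phiQ_add, phiQ_add, phiQ_comp_add q E hq, hQ, hQ']
    | monomial l d =>
      rw [Polynomial.monomial_mul_monomial, phiQ_monomial, phiQ_monomial, phiQ_monomial]
      simp only [mul_comp, C_comp, X_pow_comp]
      rw [mul_pow, ← C_pow, ← pow_mul, E_pow_q_pow q E hE d k, ← pow_add,
        add_comm l k]
      push_cast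
      rw [map_mul]
      ring

end Aux

theorem phiQ_finset_sum {Ω : Type*} [Field Ω] (q : ℕ) (E : Subring Ω)
    {ι : Type*} (s : Finset ι) (g : ι → Polynomial E) :
    phiQ q E (∑ i ∈ s, g i) = ∑ i ∈ s, phiQ q E (g i) :=
  map_sum (AddMonoidHom.mk' (phiQ q E) (phiQ_add q E)) g s

theorem phiQ_zsmul {Ω : Type*} [Field Ω] (q : ℕ) (E : Subring Ω)
    (c : ℤ) (P : Polynomial E) : phiQ q E (c • P) = c • phiQ q E P :=
  map_zsmul (AddMonoidHom.mk' (phiQ q E) (phiQ_add q E)) c P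

theorem phiQ_comp_finset_sum {Ω : Type*} [Field Ω] (q : ℕ) (E : Subring Ω)
    {p s : ℕ} [Fact p.Prime] [CharP Ω p] (hq : q = p ^ s)
    {ι : Type*} (t : Finset ι) (v : ι → Polynomial Ω) (P : Polynomial E) :
    (phiQ q E P).comp (∑ j ∈ t, v j) = ∑ j ∈ t, (phiQ q E P).comp (v j) := by
  classical
  have hq0 : q ≠ 0 := by rw [hq]; exact pow_ne_zero _ (Fact.out : p.Prime).ne_zero
  induction t using Finset.induction_on with
  | empty => simpa using phiQ_comp_zero q E hq0 P
  | insert x t h ih =>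
    rw [Finset.sum_insert h, Finset.sum_insert h, phiQ_comp_add q E hq, ih]

/-- Theorem 2.1: if `z` satisfies the `r`-linearized equation
`∑_{i<m} aᵢ fᵢ(z)^{r^i} = 0` (with `aᵢ ∈ F_q`, `fᵢ ∈ F_r[X]` being `q`-linearized,
`q = r^m`), then `(det M)(z) = 0`, where `M` is the `m×m` matrix over the commutative ring
of `q`-linearized polynomials (with composition as multiplication) whose `(i,j)` entry is
`a_{j-i}^{r^i}·(f_{j-i} ∘ X^{r^{δ(i,j)}})`, `δ(i,j) = 0` if `i ≤ j` and `= m` if `i > j`.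
The determinant is written out via the Leibniz formula, products being compositions. -/
theorem stmt8 (r m : ℕ) [NeZero m] (hr : IsPrimePow r)
    (Ω : Type*) [Field Ω] [IsAlgClosed Ω]
    (K L : Subfield Ω) [Fintype K] [Fintype L]
    (hK : Fintype.card K = r) (hL : Fintype.card L = r ^ m)
    (a : ZMod m → Ω) (ha : ∀ i, a i ∈ L)
    (f : ZMod m → Polynomial Ω)
    (hf : ∀ i, ∃ (n : ℕ) (c : ℕ → Ω), (∀ k, c k ∈ K) ∧
      f i = ∑ k ∈ Finset.range n, C (c k) * X ^ (r ^ m) ^ k)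
    (M : ZMod m → ZMod m → Polynomial Ω)
    (hM : ∀ i j, M i j =
      C (a (j - i) ^ r ^ i.val) *
        ((f (j - i)).comp (X ^ r ^ (if i.val ≤ j.val then 0 else m))))
    (z : Ω) (hz : ∑ i : ZMod m, a i * (f i).eval z ^ r ^ i.val = 0) :
    (∑ σ : Equiv.Perm (ZMod m),
        (Equiv.Perm.sign σ : ℤ) •
          (List.range m).foldr (fun i acc => (M (i : ZMod m) (σ (i : ZMod m))).comp acc) X).eval
        z = 0 := by
  classical
  -- characteristic setup
  haveI : CharP K (ringChar K) := ringChar.charP K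
  have hp : (ringChar K).Prime := CharP.char_is_prime K (ringChar K)
  set p := ringChar K with hpdef
  haveI : Fact p.Prime := ⟨hp⟩
  obtain ⟨n, -, hcardK⟩ := FiniteField.card K p
  haveI : CharP Ω p := charP_of_injective_ringHom (f := K.subtype) K.subtype.injective p
  have hr' : r = p ^ (n : ℕ) := by rw [← hK, hcardK]
  have hr0 : r ≠ 0 := by rw [hr']; exact pow_ne_zero _ hp.ne_zero
  set q := r ^ m with hqdef
  have hq : q = p ^ ((n : ℕ) * m) := by rw [hqdef, hr', ← pow_mul]
  have hq0 : q ≠ 0 := by rw [hq]; exact pow_ne_zero _ hp.ne_zero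
  have hrp : ∀ e : ℕ, r ^ e = p ^ ((n : ℕ) * e) := fun e => by rw [hr', ← pow_mul]
  -- the subring E of elements fixed by x ↦ x^q
  set E : Subring Ω := RingHom.eqLocus (iterateFrobenius Ω p ((n : ℕ) * m)) (RingHom.id Ω)
    with hEdef
  have hEmem : ∀ x : Ω, x ∈ E ↔ x ^ q = x := by
    intro x
    rw [hEdef]
    change iterateFrobenius Ω p ((n : ℕ) * m) x = x ↔ _
    rw [iterateFrobenius_def, ← hq]
  have hE : ∀ x ∈ E, x ^ q = x := fun x hx => (hEmem x).1 hx
  -- K and L land in E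
  have hKfix : ∀ x ∈ K, x ^ r = x := by
    intro x hx
    have h2 : ((⟨x, hx⟩ : K) ^ r) = (⟨x, hx⟩ : K) := by
      conv_lhs => rw [← hK]
      exact FiniteField.pow_card _
    have := congrArg Subtype.val h2
    simpa using this
  have hKfixpow : ∀ x ∈ K, ∀ j : ℕ, x ^ r ^ j = x := by
    intro x hx j
    induction j with
    | zero => simp
    | succ j ih => rw [pow_succ, pow_mul, ih, hKfix x hx]
  have hKE : ∀ x ∈ K, x ∈ E := fun x hx => (hEmem x).2 (by rw [hqdef]; exact hKfixpow x hx m)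
  have hLE : ∀ x ∈ L, x ∈ E := by
    intro x hx
    refine (hEmem x).2 ?_
    have h2 : ((⟨x, hx⟩ : L) ^ q) = (⟨x, hx⟩ : L) := by
      conv_lhs => rw [show q = Fintype.card L by rw [hL, hqdef]]
      exact FiniteField.pow_card _
    have := congrArg Subtype.val h2
    simpa using this
  -- the data of the f's
  choose nn cc hcK hfeq using hf
  set F : ZMod m → Polynomial E := fun t =>
    ∑ k ∈ Finset.range (nn t), Polynomial.C (⟨cc t k, hKE _ (hcK t k)⟩ : E) * Polynomial.X ^ k
    with hFdef
  have hphiF : ∀ t, phiQ q E (F t) = f t := by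
    intro t
    rw [hfeq t]
    have hFt : F t = ∑ k ∈ Finset.range (nn t),
        (monomial k) (⟨cc t k, hKE _ (hcK t k)⟩ : E) := by
      rw [hFdef]
      exact Finset.sum_congr rfl fun k _ => C_mul_X_pow_eq_monomial
    rw [hFt, phiQ_finset_sum]
    exact Finset.sum_congr rfl fun k _ => by rw [phiQ_monomial]
  -- the matrix over Polynomial E
  set A : Matrix (ZMod m) (ZMod m) (Polynomial E) := Matrix.of fun i j =>
    Polynomial.C (⟨a (j - i) ^ r ^ i.val, pow_mem (hLE _ (ha _)) _⟩ : E) *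
      (F (j - i) * (if i.val ≤ j.val then 1 else Polynomial.X)) with hAdef
  have hphiC : ∀ (α : E) (P : Polynomial E),
      phiQ q E (Polynomial.C α * P) = C (α : Ω) * phiQ q E P := by
    intro α P
    rw [phiQ_mul q E hq hE]
    have h1 : phiQ q E (Polynomial.C α) = C (α : Ω) * X := by
      rw [← Polynomial.monomial_zero_left, phiQ_monomial]
      simp
    rw [h1]
    simp [mul_comp]
  have hphiX : phiQ q E (Polynomial.X : Polynomial E) = X ^ q := by
    rw [← Polynomial.monomial_one_one_eq_X, phiQ_monomial]
    simp
  have hMA : ∀ i j, phiQ q E (A i j) = M i j := by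
    intro i j
    rw [hM i j, hAdef]
    by_cases hij : i.val ≤ j.val
    · simp only [Matrix.of_apply, if_pos hij, mul_one, pow_zero, pow_one]
      rw [hphiC, hphiF]
      simp [comp_X]
    · simp only [Matrix.of_apply, if_neg hij]
      rw [hphiC, phiQ_mul q E hq hE, hphiF, hphiX]
  -- exponent bookkeeping
  have hval : ∀ i j : ZMod m,
      (if i.val ≤ j.val then 0 else m) + j.val = i.val + (j - i).val := by
    intro i j
    have h1 : ((j - i).val + i.val) % m = j.val := by
      rw [← ZMod.val_add, sub_add_cancel]
    have h2 := ZMod.val_lt (j - i)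
    have h3 := ZMod.val_lt i
    have h4 := ZMod.val_lt j
    have h5 : (j - i).val + i.val = j.val ∨ (j - i).val + i.val = j.val + m := by
      rcases Nat.lt_or_ge ((j - i).val + i.val) m with h | h
      · left; rwa [Nat.mod_eq_of_lt h] at h1
      · right
        rw [Nat.mod_eq_sub_mod h, Nat.mod_eq_of_lt (by omega)] at h1
        omega
    split_ifs with h <;> omega
  -- Frobenius commutes with the f's
  have hfrob : ∀ (t : ZMod m) (s' : ℕ),
      (f t).eval (z ^ r ^ s') = ((f t).eval z) ^ r ^ s' := by
    intro t s'
    rw [hfeq t]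
    simp only [eval_finset_sum, eval_mul, eval_C, eval_pow, eval_X]
    rw [hrp s', sum_pow_char_pow]
    refine Finset.sum_congr rfl fun k _ => ?_
    rw [mul_pow]
    have hc : cc t k ^ p ^ ((n : ℕ) * s') = cc t k := by
      rw [← hrp s']; exact hKfixpow _ (hcK t k) s'
    rw [hc, ← pow_mul, ← pow_mul, ← pow_mul]
    congr 1
    ring
  -- the key vanishing
  have hw : ∀ i : ZMod m,
      (∑ j : ZMod m, (M i j).comp (X ^ r ^ j.val)).eval z = 0 := by
    intro i
    rw [eval_finset_sum]
    have hterm : ∀ j : ZMod m,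
        ((M i j).comp (X ^ r ^ j.val)).eval z =
          a (j - i) ^ r ^ i.val * ((f (j - i)).eval z) ^ r ^ (i.val + (j - i).val) := by
      intro j
      rw [hM i j]
      simp only [eval_comp, eval_mul, eval_C, eval_pow, eval_X]
      congr 1
      rw [← pow_mul, ← pow_add, add_comm j.val _, hval i j, hfrob]
    rw [Finset.sum_congr rfl fun j _ => hterm j]
    have hre : (∑ j : ZMod m,
          a (j - i) ^ r ^ i.val * ((f (j - i)).eval z) ^ r ^ (i.val + (j - i).val)) =
        ∑ t : ZMod m, a t ^ r ^ i.val * ((f t).eval z) ^ r ^ (i.val + t.val) :=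
      Fintype.sum_equiv (Equiv.subRight i) _ _ (fun j => rfl)
    rw [hre]
    have hpow : (∑ t : ZMod m, a t * ((f t).eval z) ^ r ^ t.val) ^ r ^ i.val =
        ∑ t : ZMod m, a t ^ r ^ i.val * ((f t).eval z) ^ r ^ (i.val + t.val) := by
      rw [hrp i.val, sum_pow_char_pow]
      refine Finset.sum_congr rfl fun t _ => ?_
      rw [mul_pow, ← hrp i.val, ← pow_mul, ← pow_add, add_comm t.val i.val]
    rw [← hpow, hz, zero_pow (pow_ne_zero _ hr0)]
  -- the determinant evaluated at z vanishes
  have hmain : (phiQ q E A.det).eval z = 0 := by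
    have h1 : phiQ q E A.det =
        ∑ j : ZMod m,
          (phiQ q E ((A.det • (1 : Matrix (ZMod m) (ZMod m) (Polynomial E))) 0 j)).comp
            (X ^ r ^ (j : ZMod m).val) := by
      rw [Finset.sum_eq_single (0 : ZMod m)]
      · simp [Matrix.smul_apply, Matrix.one_apply_eq, smul_eq_mul, ZMod.val_zero, comp_X]
      · intro j _ hj
        have hone : (1 : Matrix (ZMod m) (ZMod m) (Polynomial E)) 0 j = 0 :=
          Matrix.one_apply_ne (Ne.symm hj)
        simp [Matrix.smul_apply, hone, phiQ_zero]
      · intro h; exact absurd (Finset.mem_univ _) h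
    rw [h1, ← Matrix.adjugate_mul]
    have h2 : ∀ j : ZMod m, phiQ q E ((A.adjugate * A) 0 j) =
        ∑ i : ZMod m, (phiQ q E (A.adjugate 0 i)).comp (phiQ q E (A i j)) := by
      intro j
      rw [Matrix.mul_apply, phiQ_finset_sum]
      exact Finset.sum_congr rfl fun i _ => phiQ_mul q E hq hE _ _
    simp_rw [h2]
    have h3 : ∀ (s : Finset (ZMod m)) (g : ZMod m → Polynomial Ω) (w : Polynomial Ω),
        (∑ i ∈ s, g i).comp w = ∑ i ∈ s, (g i).comp w := fun s g w => by
      simp [Polynomial.comp, Polynomial.eval₂_finset_sum]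
    simp_rw [h3]
    rw [Finset.sum_comm]
    simp_rw [Polynomial.comp_assoc]
    have h4 : ∀ i : ZMod m,
        (∑ j : ZMod m,
          (phiQ q E (A.adjugate 0 i)).comp ((phiQ q E (A i j)).comp (X ^ r ^ (j : ZMod m).val))) =
        (phiQ q E (A.adjugate 0 i)).comp
          (∑ j : ZMod m, (phiQ q E (A i j)).comp (X ^ r ^ (j : ZMod m).val)) := fun i =>
      (phiQ_comp_finset_sum q E hq _ _ _).symm
    simp_rw [h4]
    rw [eval_finset_sum]
    refine Finset.sum_eq_zero fun i _ => ?_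
    rw [eval_comp]
    have h5 : (∑ j : ZMod m, (phiQ q E (A i j)).comp (X ^ r ^ (j : ZMod m).val)).eval z = 0 := by
      simp_rw [hMA]
      exact hw i
    rw [h5, phiQ_eval_zero q E hq0]
  -- identify the Leibniz expansion with `phiQ` of the determinant
  have hfold : ∀ (σ : Equiv.Perm (ZMod m)) (l : List (ZMod m)),
      l.foldr (fun i acc => (M i (σ i)).comp acc) X =
      phiQ q E (l.foldr (fun i acc => A i (σ i) * acc) 1) := by
    intro σ l
    induction l with
    | nil => rw [List.foldr_nil, List.foldr_nil, phiQ_one]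
    | cons b l ih =>
      rw [List.foldr_cons, List.foldr_cons, ih, phiQ_mul q E hq hE, hMA]
  have hfoldprod : ∀ (σ : Equiv.Perm (ZMod m)) (l : List (ZMod m)),
      l.foldr (fun i acc => A i (σ i) * acc) 1 = (l.map (fun i => A i (σ i))).prod := by
    intro σ l
    induction l with
    | nil => simp
    | cons b l ih => simp [ih]
  have hprod : ∀ σ : Equiv.Perm (ZMod m),
      (((List.range m).map (fun x : ℕ => (x : ZMod m))).map (fun i => A i (σ i))).prod =
      ∏ i : ZMod m, A i (σ i) := by
    intro σ
    rw [List.map_map]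
    have e2 : ((List.range m).map ((fun i => A i (σ i)) ∘ (fun x : ℕ => (x : ZMod m)))).prod =
        ∏ i ∈ Finset.range m, A (i : ZMod m) (σ (i : ZMod m)) := by
      rw [Finset.prod]
      rfl
    rw [e2]
    refine Finset.prod_nbij' (fun x : ℕ => (x : ZMod m)) (fun x : ZMod m => x.val)
      ?_ ?_ ?_ ?_ ?_
    · intro x hx; exact Finset.mem_univ _
    · intro x _; exact Finset.mem_range.2 (ZMod.val_lt x)
    · intro x hx; exact ZMod.val_cast_of_lt (Finset.mem_range.1 hx)
    · intro x _; exact ZMod.natCast_rightInverse x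
    · intro x hx; rfl
  have hdet : (∑ σ : Equiv.Perm (ZMod m),
      (Equiv.Perm.sign σ : ℤ) • ∏ i : ZMod m, A i (σ i)) = A.det := by
    rw [← Matrix.det_transpose A, Matrix.det_apply]
    refine Finset.sum_congr rfl fun σ _ => ?_
    rw [Units.smul_def]
    simp [Matrix.transpose_apply]
  have hgoal : (∑ σ : Equiv.Perm (ZMod m),
      (Equiv.Perm.sign σ : ℤ) •
        (List.range m).foldr (fun i acc => (M (i : ZMod m) (σ (i : ZMod m))).comp acc) X) =
      phiQ q E A.det := by
    rw [← hdet, phiQ_finset_sum]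
    refine Finset.sum_congr rfl fun σ _ => ?_
    rw [phiQ_zsmul, hfold σ, hfoldprod σ]
    congr 1
    rw [← hprod σ]
    congr 1
    rw [show (do let a ← List.range m; pure ((a : ℕ) : ZMod m)) = (List.range m).map (fun x : ℕ => (x : ZMod m)) from List.flatMap_pure_eq_map _ _]
  rw [hgoal]
  exact hmain
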